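/- Let S be a densely defined, closed operator in H with S ≥ εI for ε > 0, viewed via the Hilbert space W = dom(S) equipped with inner product (u,v)_W = (Su, Sv)_H. The operator T on W defined by (w₁, T w₂)_W = (w₁, S w₂)_H is bounded, self-adjoint, nonnegative, and satisfies ‖T‖ ≤ ε⁻¹. -/

import Mathlib

open scoped ComplexInnerProductSpace
open Filter

noncomputable section

variable {H : Type*} [NormedAddCommGroup H] [InnerProductSpace ℂ H] [CompleteSpace H]

/-- The kernel of the adjoint `S*` of a densely defined operator `S`,
described as `{v | ∀ u ∈ dom S, ⟪S u, v⟫ = 0}`. -/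
def adjKerD (S : H →ₗ.[ℂ] H) : Submodule ℂ H where
  carrier := {v | ∀ u : S.domain, ⟪S u, v⟫ = 0}
  add_mem' := by
    intro a b ha hb u
    rw [inner_add_right, ha u, hb u, add_zero]
  zero_mem' := by
    intro u; exact inner_zero_right _
  smul_mem' := by
    intro c a ha u
    rw [inner_smul_right, ha u, mul_zero]

/-- Let `S` be densely defined, closed, symmetric with `S ≥ ε·I`,
`ε > 0`. View `W := dom S` as a Hilbert space with inner product
`(u, v)_W = ⟪S u, S v⟫_H` (so `‖w‖_W = ‖S w‖_H`). If `T : W → W` is the linear map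
determined by `(w₁, T w₂)_W = ⟪w₁, S w₂⟫_H`, then `T` is bounded with `‖T‖ ≤ ε⁻¹`,
self-adjoint, and nonnegative (all with respect to the `W`-inner product). -/
theorem stmt_2 (S : H →ₗ.[ℂ] H)
    (hdense : Dense (S.domain : Set H))
    (hclosed : S.IsClosed)
    (hsym : ∀ u v : S.domain, ⟪S u, (v : H)⟫ = ⟪(u : H), S v⟫)
    (ε : ℝ) (hε : 0 < ε)
    (hbound : ∀ u : S.domain, ε * ‖(u : H)‖ ^ 2 ≤ (⟪(u : H), S u⟫).re)
    (T : S.domain →ₗ[ℂ] S.domain)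
    (hT : ∀ w₁ w₂ : S.domain, ⟪S w₁, S (T w₂)⟫ = ⟪(w₁ : H), S w₂⟫) :
    -- boundedness with norm bound `ε⁻¹` (in the `W`-norm `‖w‖_W = ‖S w‖`):
    (∀ w : S.domain, ‖S (T w)‖ ≤ ε⁻¹ * ‖S w‖) ∧
    -- self-adjointness in `W`:
    (∀ w₁ w₂ : S.domain, ⟪S (T w₁), S w₂⟫ = ⟪S w₁, S (T w₂)⟫) ∧
    -- nonnegativity in `W`:
    (∀ w : S.domain, (⟪S w, S (T w)⟫).im = 0 ∧ 0 ≤ (⟪S w, S (T w)⟫).re) := by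

  -- lower bound: ε‖u‖ ≤ ‖S u‖
  have hlow : ∀ u : S.domain, ε * ‖(u : H)‖ ≤ ‖S u‖ := by
    intro u
    rcases eq_or_lt_of_le (norm_nonneg (u : H)) with h0 | h0
    · simp [← h0]
    · have h1 : ε * ‖(u : H)‖ ^ 2 ≤ ‖(u : H)‖ * ‖S u‖ := by
        calc ε * ‖(u : H)‖ ^ 2 ≤ (⟪(u : H), S u⟫).re := hbound u
          _ ≤ ‖⟪(u : H), S u⟫‖ := Complex.re_le_norm _
          _ ≤ ‖(u : H)‖ * ‖S u‖ := norm_inner_le_norm _ _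
      have := (mul_le_mul_iff_of_pos_right h0).mp (by nlinarith : ε * ‖(u : H)‖ * ‖(u : H)‖ ≤ ‖S u‖ * ‖(u : H)‖)
      linarith
  refine ⟨?_, ?_, ?_⟩
  · intro w
    have key : ‖S (T w)‖ ^ 2 ≤ ‖(T w : H)‖ * ‖S w‖ := by
      have := hT (T w) w
      calc ‖S (T w)‖ ^ 2 = (⟪S (T w), S (T w)⟫).re :=
            (inner_self_eq_norm_sq (𝕜 := ℂ) _).symm
        _ = (⟪((T w) : H), S w⟫).re := by rw [this]
        _ ≤ ‖⟪((T w) : H), S w⟫‖ := Complex.re_le_norm _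
        _ ≤ ‖((T w) : H)‖ * ‖S w‖ := norm_inner_le_norm _ _
    have hTw : ε * ‖((T w) : H)‖ ≤ ‖S (T w)‖ := hlow (T w)
    rcases eq_or_lt_of_le (norm_nonneg (S (T w))) with h0 | h0
    · rw [← h0]; positivity
    · have h2 : ‖((T w) : H)‖ ≤ ε⁻¹ * ‖S (T w)‖ := by
        rw [le_inv_mul_iff₀ hε]; exact hTw
      have h3 : ‖S (T w)‖ ^ 2 ≤ ε⁻¹ * ‖S (T w)‖ * ‖S w‖ :=
        key.trans (by
          have : (0:ℝ) ≤ ‖S w‖ := norm_nonneg _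
          nlinarith)
      nlinarith [inv_pos.mpr hε]
  · intro w₁ w₂
    calc ⟪S (T w₁), S w₂⟫ = (starRingEnd ℂ) ⟪S w₂, S (T w₁)⟫ := (inner_conj_symm _ _).symm
      _ = (starRingEnd ℂ) ⟪(w₂ : H), S w₁⟫ := by rw [hT]
      _ = ⟪S w₁, (w₂ : H)⟫ := inner_conj_symm _ _
      _ = ⟪(w₁ : H), S w₂⟫ := hsym w₁ w₂
      _ = ⟪S w₁, S (T w₂)⟫ := (hT w₁ w₂).symm
  · intro w
    have h1 : ⟪S w, S (T w)⟫ = ⟪(w : H), S w⟫ := hT w w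
    have hreal : (starRingEnd ℂ) ⟪(w : H), S w⟫ = ⟪(w : H), S w⟫ := by
      rw [inner_conj_symm]; exact hsym w w
    constructor
    · rw [h1]
      have := congrArg Complex.im hreal
      simpa using by linarith [this, Complex.conj_im (⟪(w : H), S w⟫)]
    · rw [h1]
      have := hbound w
      nlinarith [sq_nonneg ‖(w : H)‖]
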